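/- Let f : ℝⁿ → ℝ be differentiable, attaining its global minimum value f* = f(x*), and satisfying the Polyak–Łojasiewicz inequality f(y) − f* ≤ (1/(2σ))‖∇f(y)‖² for all y ∈ ℝⁿ, with σ > 0. Let t₀ ∈ ℝ, T_p > 0, r a positive integer, 𝒯(t) = (T_p/(T_p + t₀ − t))^r on [t₀, t₀ + T_p), and k > 0. Suppose x : [t₀, t₀ + T_p) → ℝⁿ is differentiable with ẋ(t) = −k 𝒯(t) ∇f(x(t)). Then f(x(t)) → f* as t → (t₀ + T_p)⁻; i.e., the flow achieves prescribed finite-time convergence of the function value at the user-prescribed time T_p, independently of the initial condition x(t₀). -/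

import Mathlib

/-- The time-scaling function `𝒯(t) = (T_p / (T_p + t₀ - t))^r`. -/
noncomputable def Tscale (t₀ Tp : ℝ) (r : ℕ) (t : ℝ) : ℝ := (Tp / (Tp + t₀ - t)) ^ r

/-- prescribed finite-time convergence of the function value
along the time-varying-feedback gradient flow of a PŁ function:
`f(x(t)) → f*` as `t → (t₀ + T_p)⁻`, independently of `x(t₀)`. -/
theorem pl_gradient_flow_prescribed_time_convergence
    (n : ℕ) (f : EuclideanSpace ℝ (Fin n) → ℝ) (hf : Differentiable ℝ f)
    (xstar : EuclideanSpace ℝ (Fin n)) (hmin : ∀ y, f xstar ≤ f y)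
    (σ : ℝ) (hσ : 0 < σ)
    (hPL : ∀ y, f y - f xstar ≤ 1 / (2 * σ) * ‖gradient f y‖ ^ 2)
    (t₀ Tp : ℝ) (hTp : 0 < Tp) (r : ℕ) (hr : 0 < r) (k : ℝ) (hk : 0 < k)
    (x : ℝ → EuclideanSpace ℝ (Fin n))
    (hx : ∀ t ∈ Set.Ico t₀ (t₀ + Tp),
      HasDerivAt x (-(k * Tscale t₀ Tp r t) • gradient f (x t)) t) :
    Filter.Tendsto (fun t => f (x t))
      (nhdsWithin (t₀ + Tp) (Set.Iio (t₀ + Tp))) (nhds (f xstar)) := by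
  have two_sigma : (0:ℝ) < 2 * σ := by linarith
  have hc0 : 0 < 2 * σ * k := by positivity
  -- abbreviations
  set u : ℝ → ℝ := fun t => Tp + t₀ - t with hudef
  set Φ : ℝ → ℝ := fun t => -(2 * σ * k * Tp) * Real.log (u t) with hΦdef
  set h : ℝ → ℝ := fun t => (f (x t) - f xstar) * Real.exp (Φ t) with hhdef
  have hu_pos : ∀ t ∈ Set.Ico t₀ (t₀ + Tp), 0 < u t := by
    intro t ht; show 0 < Tp + t₀ - t; linarith [ht.2]
  have hu_le : ∀ t ∈ Set.Ico t₀ (t₀ + Tp), u t ≤ Tp := by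
    intro t ht; show Tp + t₀ - t ≤ Tp; linarith [ht.1]
  -- derivative of f ∘ x
  have hg : ∀ t ∈ Set.Ico t₀ (t₀ + Tp),
      HasDerivAt (fun s => f (x s)) (-(k * Tscale t₀ Tp r t) * ‖gradient f (x t)‖ ^ 2) t := by
    intro t ht
    have h1 := ((hf (x t)).hasGradientAt.hasFDerivAt).comp_hasDerivAt t (hx t ht)
    refine h1.congr_deriv ?_
    rw [InnerProductSpace.toDual_apply_apply, real_inner_smul_right, real_inner_self_eq_norm_sq]
  -- derivative of Φ
  have hΦd : ∀ t ∈ Set.Ico t₀ (t₀ + Tp), HasDerivAt Φ (2 * σ * k * Tp / u t) t := by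
    intro t ht
    have hu : HasDerivAt u (-1) t := by
      simpa using (hasDerivAt_id t).const_sub (Tp + t₀)
    have h2 := (hu.log (hu_pos t ht).ne').const_mul (-(2 * σ * k * Tp))
    refine h2.congr_deriv ?_
    ring
  -- derivative of h
  have hh : ∀ t ∈ Set.Ico t₀ (t₀ + Tp), HasDerivAt h
      ((-(k * Tscale t₀ Tp r t) * ‖gradient f (x t)‖ ^ 2) * Real.exp (Φ t)
        + (f (x t) - f xstar) * (Real.exp (Φ t) * (2 * σ * k * Tp / u t))) t := by
    intro t ht
    exact ((hg t ht).sub_const (f xstar)).mul ((hΦd t ht).exp)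
  -- the derivative is nonpositive
  have hD : ∀ t ∈ Set.Ico t₀ (t₀ + Tp),
      (-(k * Tscale t₀ Tp r t) * ‖gradient f (x t)‖ ^ 2) * Real.exp (Φ t)
        + (f (x t) - f xstar) * (Real.exp (Φ t) * (2 * σ * k * Tp / u t)) ≤ 0 := by
    intro t ht
    have hu0 := hu_pos t ht
    have huT := hu_le t ht
    have h1 : (1:ℝ) ≤ Tp / u t := (one_le_div hu0).mpr huT
    have hT : Tp / u t ≤ Tscale t₀ Tp r t := by
      have := le_self_pow₀ h1 hr.ne'
      simpa [Tscale] using this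
    have hT0 : 0 ≤ Tscale t₀ Tp r t := le_trans (by positivity) hT
    have hV0 : 0 ≤ f (x t) - f xstar := sub_nonneg.mpr (hmin (x t))
    have hPL' : 2 * σ * (f (x t) - f xstar) ≤ ‖gradient f (x t)‖ ^ 2 := by
      have h0 := hPL (x t)
      rw [div_mul_eq_mul_div, one_mul, le_div_iff₀ two_sigma] at h0
      linarith
    have hE : (0:ℝ) < Real.exp (Φ t) := Real.exp_pos _
    have key : (f (x t) - f xstar) * (2 * σ * k * Tp / u t)
        ≤ k * Tscale t₀ Tp r t * ‖gradient f (x t)‖ ^ 2 := by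
      have e1 : (f (x t) - f xstar) * (2 * σ * k * Tp / u t)
          = (2 * σ * k * (f (x t) - f xstar)) * (Tp / u t) := by ring
      have e2 : (2 * σ * k * (f (x t) - f xstar)) * (Tp / u t)
          ≤ (2 * σ * k * (f (x t) - f xstar)) * Tscale t₀ Tp r t :=
        mul_le_mul_of_nonneg_left hT (by positivity)
      have e3 : (2 * σ * k * (f (x t) - f xstar)) * Tscale t₀ Tp r t
          = (k * Tscale t₀ Tp r t) * (2 * σ * (f (x t) - f xstar)) := by ring
      have e4 : (k * Tscale t₀ Tp r t) * (2 * σ * (f (x t) - f xstar))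
          ≤ (k * Tscale t₀ Tp r t) * ‖gradient f (x t)‖ ^ 2 :=
        mul_le_mul_of_nonneg_left hPL' (by positivity)
      calc (f (x t) - f xstar) * (2 * σ * k * Tp / u t)
          = (2 * σ * k * (f (x t) - f xstar)) * (Tp / u t) := e1
        _ ≤ (2 * σ * k * (f (x t) - f xstar)) * Tscale t₀ Tp r t := e2
        _ = (k * Tscale t₀ Tp r t) * (2 * σ * (f (x t) - f xstar)) := e3
        _ ≤ k * Tscale t₀ Tp r t * ‖gradient f (x t)‖ ^ 2 := e4
    nlinarith [mul_le_mul_of_nonneg_left key hE.le]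
  -- h is antitone on the interval
  have hanti : AntitoneOn h (Set.Ico t₀ (t₀ + Tp)) := by
    apply antitoneOn_of_deriv_nonpos (convex_Ico _ _)
    · intro t ht; exact (hh t ht).continuousAt.continuousWithinAt
    · rw [interior_Ico]; intro t ht
      exact ((hh t (Set.Ioo_subset_Ico_self ht)).differentiableAt).differentiableWithinAt
    · rw [interior_Ico]; intro t ht
      rw [(hh t (Set.Ioo_subset_Ico_self ht)).deriv]
      exact hD t (Set.Ioo_subset_Ico_self ht)
  have ht₀mem : t₀ ∈ Set.Ico t₀ (t₀ + Tp) := ⟨le_rfl, by linarith⟩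
  -- the upper bound
  have hbound : ∀ t ∈ Set.Ioo t₀ (t₀ + Tp),
      f (x t) ≤ f xstar + h t₀ * u t ^ (2 * σ * k * Tp) := by
    intro t ht
    have htm : t ∈ Set.Ico t₀ (t₀ + Tp) := Set.Ioo_subset_Ico_self ht
    have h1 : h t ≤ h t₀ := hanti ht₀mem htm ht.1.le
    have hE : (0:ℝ) < Real.exp (Φ t) := Real.exp_pos _
    have h2 : f (x t) - f xstar ≤ h t₀ / Real.exp (Φ t) := by
      rw [le_div_iff₀ hE]; exact h1
    have h3 : h t₀ / Real.exp (Φ t) = h t₀ * u t ^ (2 * σ * k * Tp) := by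
      rw [Real.rpow_def_of_pos (hu_pos t htm), div_eq_mul_inv, ← Real.exp_neg]
      congr 1
      simp only [hΦdef]
      ring_nf
    linarith [h3 ▸ h2]
  -- limits
  have hLmem : Set.Ioo t₀ (t₀ + Tp) ∈ nhdsWithin (t₀ + Tp) (Set.Iio (t₀ + Tp)) :=
    Ioo_mem_nhdsLT_of_mem ⟨by linarith, le_rfl⟩
  have hu_t : Filter.Tendsto u (nhdsWithin (t₀ + Tp) (Set.Iio (t₀ + Tp))) (nhds 0) := by
    have hcont : Continuous u := by fun_prop
    have h0 : Filter.Tendsto u (nhdsWithin (t₀ + Tp) (Set.Iio (t₀ + Tp))) (nhds (u (t₀ + Tp))) :=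
      (hcont.tendsto _).mono_left nhdsWithin_le_nhds
    have : Tp + t₀ - (t₀ + Tp) = 0 := by ring
    rw [show (0:ℝ) = Tp + t₀ - (t₀ + Tp) by ring]
    exact h0
  have hpow_t : Filter.Tendsto (fun t => u t ^ (2 * σ * k * Tp))
      (nhdsWithin (t₀ + Tp) (Set.Iio (t₀ + Tp))) (nhds 0) := by
    have hca : ContinuousAt (fun v : ℝ => v ^ (2 * σ * k * Tp)) 0 :=
      Real.continuousAt_rpow_const 0 (2 * σ * k * Tp) (Or.inr (by positivity))
    have := hca.tendsto.comp hu_t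
    simpa [Real.zero_rpow (by positivity : 2 * σ * k * Tp ≠ 0), Function.comp_def] using this
  have hupper : Filter.Tendsto (fun t => f xstar + h t₀ * u t ^ (2 * σ * k * Tp))
      (nhdsWithin (t₀ + Tp) (Set.Iio (t₀ + Tp))) (nhds (f xstar)) := by
    have := Filter.Tendsto.add (tendsto_const_nhds (x := f xstar))
      (Filter.Tendsto.mul (tendsto_const_nhds (x := h t₀)) hpow_t)
    simpa using this
  apply tendsto_of_tendsto_of_tendsto_of_le_of_le' tendsto_const_nhds hupper
  · filter_upwards [hLmem] with t ht using hmin (x t)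
  · filter_upwards [hLmem] with t ht using hbound t ht
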